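/- For all real x ≥ 0 and all integers k ≥ 2, one has cosh(x/k) − (2/k)·sinh(x/2) ≤ 1. -/

import Mathlib

lemma aux_sinh_sq (a : ℝ) (ha : 0 ≤ a) :
    ∀ k : ℕ, 2 ≤ k → (k : ℝ) * Real.sinh a ^ 2 ≤ Real.sinh (k * a) := by
  intro k hk
  induction k, hk using Nat.le_induction with
  | base =>
    push_cast
    rw [Real.sinh_two_mul]
    nlinarith [Real.sinh_lt_cosh a, Real.sinh_nonneg_iff.mpr ha]
  | succ n hn ih =>
    push_cast at ih ⊢
    have h1 : ((n : ℝ) + 1) * a = n * a + a := by ring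
    rw [h1, Real.sinh_add]
    have h2 : Real.cosh a ≤ Real.cosh (n * a) := by
      rw [Real.cosh_le_cosh, abs_of_nonneg ha, abs_of_nonneg (by positivity)]
      nlinarith [ha, show (2:ℝ) ≤ n from by exact_mod_cast hn]
    nlinarith [Real.sinh_lt_cosh a, Real.sinh_nonneg_iff.mpr ha, Real.one_le_cosh a,
      Real.sinh_nonneg_iff.mpr (show (0:ℝ) ≤ (n:ℝ) * a by positivity)]

/-- For all real `x ≥ 0` and all integers `k ≥ 2`,
`cosh(x/k) − (2/k)·sinh(x/2)` ≤ 1`. -/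
theorem cosh_sub_sinh_le_one (x : ℝ) (hx : 0 ≤ x) (k : ℕ) (hk : 2 ≤ k) :
    Real.cosh (x / k) - (2 / k) * Real.sinh (x / 2) ≤ 1 := by
  have hk0 : (0 : ℝ) < k := by positivity
  set a := x / (2 * k) with ha_def
  have ha : 0 ≤ a := by positivity
  have h1 : x / k = 2 * a := by field_simp [ha_def]; rw [ha_def]; field_simp
  have h2 : x / 2 = k * a := by field_simp [ha_def]; rw [ha_def]; field_simp
  rw [h1, h2, Real.cosh_two_mul, Real.cosh_sq]
  have key := aux_sinh_sq a ha k hk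
  have hk2 : (2:ℝ) / k > 0 := by positivity
  have h3 : 2 * Real.sinh a ^ 2 ≤ (2 / k) * Real.sinh (k * a) := by
    rw [div_mul_eq_mul_div, le_div_iff₀ hk0]
    nlinarith [key]
  linarith
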